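/- Let d ≥ 2 and let f : N^d → R be a function such that for every collection of finite sets S_0, ..., S_{d-1} of distinct flats in R^d, where S_i consists of i-flats for i = 0, ..., d-1, one has I(S_0, ..., S_{d-1}) ≤ f(|S_0|, ..., |S_{d-1}|). Then for all integers m ≥ 0 and 0 ≤ j ≤ m, and for every collection of finite sets S_j, ..., S_{j+d-1} of distinct flats in R^{d+m}, where S_i consists of i-flats for i = j, ..., j+d-1, one has I(S_j, ..., S_{j+d-1}) ≤ f(|S_j|, ..., |S_{j+d-1}|). -/

import Mathlib

open scoped Classical
noncomputable section

/-- An `i`-flat in `ℝ^n`: a nonempty affine subspace of dimension `i`. -/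
def IsFlat (n i : ℕ) (f : AffineSubspace ℝ (Fin n → ℝ)) : Prop :=
  (f : Set (Fin n → ℝ)).Nonempty ∧ Module.finrank ℝ f.direction = i

/-- The number of tuples `(f_0, …, f_{d-1})` of flats in `ℝ^n` with `f_t ∈ S t` for each `t`
and `f_t ⊆ f_{t+1}` for `t = 0, …, d-2`. -/
def flagCount (n d : ℕ) (S : Fin d → Finset (AffineSubspace ℝ (Fin n → ℝ))) : ℕ :=
  Set.ncard {f : Fin d → AffineSubspace ℝ (Fin n → ℝ) |
    (∀ t, f t ∈ S t) ∧ ∀ t : Fin d, ∀ h : (t : ℕ) + 1 < d, f t ≤ f ⟨(t : ℕ) + 1, h⟩}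

open Module Submodule

private lemma exists_notMem_all {V : Type*} [AddCommGroup V] [Module ℝ V]
    {ι : Type*} [Finite ι] (p : ι → Submodule ℝ V) (hp : ∀ i, p i ≠ ⊤) :
    ∃ v : V, ∀ i, v ∉ p i := by
  by_contra h
  push_neg at h
  have hcov : ⋃ i, (p i : Set V) = Set.univ :=
    Set.eq_univ_of_forall fun v => Set.mem_iUnion.2 (h v)
  obtain ⟨i, hi⟩ := Subspace.exists_eq_top_of_iUnion_eq_univ hcov
  exact hp i hi

private lemma flat_eq_of_le {V : Type*} [AddCommGroup V] [Module ℝ V] [FiniteDimensional ℝ V]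
    {F G : AffineSubspace ℝ V} (hle : F ≤ G) (hne : (F : Set V).Nonempty)
    (hrk : finrank ℝ G.direction ≤ finrank ℝ F.direction) : F = G := by
  obtain ⟨p, hp⟩ := hne
  exact AffineSubspace.ext_of_direction_eq
    (Submodule.eq_of_le_of_finrank_le (AffineSubspace.direction_le hle) hrk)
    ⟨p, hp, hle hp⟩

private lemma stepH {n d j : ℕ} (hn : 1 ≤ n)
    (S : Fin d → Finset (AffineSubspace ℝ (Fin n → ℝ)))
    (hS : ∀ t : Fin d, ∀ g ∈ S t, IsFlat n (j + 1 + t) g) :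
    ∃ (H : AffineSubspace ℝ (Fin n → ℝ)),
      (∀ t : Fin d, ∀ g ∈ S t, IsFlat n (j + t) (g ⊓ H)) ∧
      (∀ t : Fin d, Set.InjOn (· ⊓ H) (S t)) := by
  classical
  have : Inhabited (Fin n) := ⟨⟨0, hn⟩⟩
  have hVnt : Nontrivial (Fin n → ℝ) := Pi.nontrivial
  -- evaluation maps on the parameter space
  let evl : (Fin n → ℝ) → (Module.Dual ℝ (Fin n → ℝ) × ℝ) →ₗ[ℝ] ℝ := fun v =>
    { toFun := fun Lc => Lc.1 v
      map_add' := by intro a b; rfl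
      map_smul' := by intro r a; rfl }
  let evp : (Fin n → ℝ) → (Module.Dual ℝ (Fin n → ℝ) × ℝ) →ₗ[ℝ] ℝ := fun x =>
    evl x - LinearMap.snd ℝ _ ℝ
  let A : Submodule ℝ (Fin n → ℝ) → Submodule ℝ (Module.Dual ℝ (Fin n → ℝ) × ℝ) :=
    fun D => ⨅ v ∈ (D : Set (Fin n → ℝ)), LinearMap.ker (evl v)
  let B : Set (Fin n → ℝ) → Submodule ℝ (Module.Dual ℝ (Fin n → ℝ) × ℝ) :=
    fun s => ⨅ x ∈ s, LinearMap.ker (evp x)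
  have memA : ∀ (D : Submodule ℝ (Fin n → ℝ)) (Lc : Module.Dual ℝ (Fin n → ℝ) × ℝ),
      Lc ∈ A D ↔ ∀ v ∈ D, Lc.1 v = 0 := by
    intro D Lc
    simp [A, Submodule.mem_iInf, LinearMap.mem_ker, evl]
  have memB : ∀ (s : Set (Fin n → ℝ)) (Lc : Module.Dual ℝ (Fin n → ℝ) × ℝ),
      Lc ∈ B s ↔ ∀ x ∈ s, Lc.1 x = Lc.2 := by
    intro s Lc
    simp [B, Submodule.mem_iInf, LinearMap.mem_ker, evp, evl, sub_eq_zero]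
  have hAne : ∀ D : Submodule ℝ (Fin n → ℝ), D ≠ ⊥ → A D ≠ ⊤ := by
    intro D hD hT
    obtain ⟨v, hvD, hv0⟩ := Submodule.ne_bot_iff D |>.mp hD
    obtain ⟨i, hi⟩ : ∃ i, v i ≠ 0 := by
      by_contra hc; push_neg at hc; exact hv0 (funext hc)
    have : ((LinearMap.proj i : (Fin n → ℝ) →ₗ[ℝ] ℝ), (0 : ℝ)) ∈ A D :=
      hT ▸ Submodule.mem_top
    exact hi ((memA D _).mp this v hvD)
  have hBne : ∀ s : Set (Fin n → ℝ), s.Nonempty → B s ≠ ⊤ := by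
    intro s ⟨x, hx⟩ hT
    have : ((0 : Module.Dual ℝ (Fin n → ℝ)), (1 : ℝ)) ∈ B s := hT ▸ Submodule.mem_top
    simpa using (memB s _).mp this x hx
  -- the index type of bad conditions
  let ι := Option ((Σ t : Fin d, {F // F ∈ S t}) ⊕
    (Σ t : Fin d, {F // F ∈ S t} × {F // F ∈ S t}))
  let bad : ι → Submodule ℝ (Module.Dual ℝ (Fin n → ℝ) × ℝ) := fun i =>
    match i with
    | none => A ⊤
    | some (.inl ⟨_, F⟩) => A F.1.direction
    | some (.inr ⟨_, F1, F2⟩) =>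
        if ((F1.1 ⊓ F2.1 : AffineSubspace ℝ (Fin n → ℝ)) : Set (Fin n → ℝ)).Nonempty
        then B ((F1.1 ⊓ F2.1 : AffineSubspace ℝ (Fin n → ℝ)) : Set (Fin n → ℝ)) else ⊥
  have hbad : ∀ i, bad i ≠ ⊤ := by
    rintro (_ | (⟨t, F⟩ | ⟨t, F1, F2⟩))
    · exact hAne ⊤ bot_lt_top.ne'
    · apply hAne
      intro hbot
      have := (hS t F.1 F.2).2
      rw [hbot] at this
      simp [finrank_bot] at this
      omega
    · dsimp only [bad]
      split_ifs with h
      · exact hBne _ h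
      · exact bot_ne_top
  obtain ⟨⟨L, c⟩, hLc⟩ := exists_notMem_all bad hbad
  -- extract the generic properties
  have hL0 : ∃ v0, L v0 ≠ 0 := by
    have := hLc none
    rw [memA] at this
    push_neg at this
    obtain ⟨v, _, hv⟩ := this
    exact ⟨v, hv⟩
  have hA' : ∀ t : Fin d, ∀ F ∈ S t, ∃ v ∈ F.direction, L v ≠ 0 := by
    intro t F hF
    have := hLc (some (.inl ⟨t, ⟨F, hF⟩⟩))
    rw [memA] at this
    push_neg at this
    exact this
  have hB' : ∀ t : Fin d, ∀ F1 ∈ S t, ∀ F2 ∈ S t,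
      ((F1 ⊓ F2 : AffineSubspace ℝ (Fin n → ℝ)) : Set (Fin n → ℝ)).Nonempty →
      ∃ x ∈ (F1 ⊓ F2 : AffineSubspace ℝ (Fin n → ℝ)), L x ≠ c := by
    intro t F1 h1 F2 h2 hne
    have := hLc (some (.inr ⟨t, ⟨F1, h1⟩, ⟨F2, h2⟩⟩))
    simp only [bad, if_pos hne] at this
    rw [memB] at this
    push_neg at this
    exact this
  clear hLc
  -- kernel of L is a hyperplane
  have hrange : LinearMap.range L = ⊤ := by
    rw [LinearMap.range_eq_top]
    intro r
    obtain ⟨v0, hv0⟩ := hL0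
    exact ⟨(r / L v0) • v0, by rw [map_smul, smul_eq_mul, div_mul_cancel₀ _ hv0]⟩
  have hkerL : finrank ℝ (LinearMap.ker L) + 1 = n := by
    have h1 := L.finrank_range_add_finrank_ker
    rw [hrange, finrank_top, Module.finrank_self, Module.finrank_fin_fun] at h1
    omega
  -- the affine hyperplane
  obtain ⟨v0, hv0⟩ := hL0
  set x0 : Fin n → ℝ := (c / L v0) • v0 with hx0def
  have hx0 : L x0 = c := by rw [hx0def, map_smul, smul_eq_mul, div_mul_cancel₀ _ hv0]
  set H : AffineSubspace ℝ (Fin n → ℝ) := AffineSubspace.mk' x0 (LinearMap.ker L) with hHdef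
  have memH : ∀ x : Fin n → ℝ, x ∈ H ↔ L x = c := by
    intro x
    rw [hHdef, AffineSubspace.mem_mk', vsub_eq_sub, LinearMap.mem_ker,
      map_sub, hx0, sub_eq_zero]
  have hdirH : H.direction = LinearMap.ker L := by
    rw [hHdef, AffineSubspace.direction_mk']
  -- claim 1 : each intersection is a flat of dimension one less
  have claim1 : ∀ t : Fin d, ∀ F ∈ S t, IsFlat n (j + t) (F ⊓ H) := by
    intro t F hF
    obtain ⟨⟨pF, hpF⟩, hrkF⟩ := hS t F hF
    obtain ⟨v, hvD, hvL⟩ := hA' t F hF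
    set x : Fin n → ℝ := ((c - L pF) / L v) • v +ᵥ pF with hxdef
    have hxF : x ∈ F :=
      AffineSubspace.vadd_mem_of_mem_direction (Submodule.smul_mem _ _ hvD) hpF
    have hxH : x ∈ H := by
      rw [memH, hxdef, vadd_eq_add, map_add, map_smul, smul_eq_mul,
        div_mul_cancel₀ _ hvL]
      ring
    have hdir : (F ⊓ H).direction = F.direction ⊓ LinearMap.ker L := by
      rw [AffineSubspace.direction_inf_of_mem hxF hxH, hdirH]
    have hsup : LinearMap.ker L < F.direction ⊔ LinearMap.ker L := by
      refine lt_of_le_of_ne le_sup_right (fun h => hvL ?_)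
      have : v ∈ F.direction ⊔ LinearMap.ker L := Submodule.mem_sup_left hvD
      rw [← h] at this
      exact this
    have h1 : finrank ℝ (LinearMap.ker L) < finrank ℝ ↥(F.direction ⊔ LinearMap.ker L) :=
      Submodule.finrank_lt_finrank_of_lt hsup
    have h2 : finrank ℝ ↥(F.direction ⊔ LinearMap.ker L) ≤ n := by
      have := Submodule.finrank_le (F.direction ⊔ LinearMap.ker L)
      rwa [Module.finrank_fin_fun] at this
    have h3 := Submodule.finrank_sup_add_finrank_inf_eq F.direction (LinearMap.ker L)
    rw [hrkF] at h3
    refine ⟨⟨x, (AffineSubspace.mem_inf_iff x F H).mpr ⟨hxF, hxH⟩⟩, ?_⟩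
    rw [hdir]
    omega
  -- claim 2 : injectivity on each level
  have claim2 : ∀ t : Fin d, Set.InjOn (· ⊓ H) (S t) := by
    intro t F1 h1 F2 h2 heq
    simp only [Finset.mem_coe] at h1 h2
    by_contra hne
    have hrk1 := (hS t F1 h1).2
    have hrk2 := (hS t F2 h2).2
    have hne1 : ((F1 ⊓ H : AffineSubspace ℝ (Fin n → ℝ)) : Set (Fin n → ℝ)).Nonempty :=
      (claim1 t F1 h1).1
    have hle12 : F1 ⊓ H ≤ F1 ⊓ F2 := by
      refine le_inf inf_le_left ?_
      rw [show F1 ⊓ H = F2 ⊓ H from heq]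
      exact inf_le_left
    have hne12 : ((F1 ⊓ F2 : AffineSubspace ℝ (Fin n → ℝ)) : Set (Fin n → ℝ)).Nonempty := by
      obtain ⟨x, hx⟩ := hne1
      exact ⟨x, hle12 hx⟩
    obtain ⟨x, hxmem, hxc⟩ := hB' t F1 h1 F2 h2 hne12
    have hd12le : finrank ℝ (F1 ⊓ F2 : AffineSubspace ℝ (Fin n → ℝ)).direction ≤ j + 1 + t := by
      have := Submodule.finrank_mono (AffineSubspace.direction_le
        (inf_le_left : F1 ⊓ F2 ≤ F1))
      rwa [hrk1] at this
    rcases eq_or_lt_of_le hd12le with hcase | hcase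
    · -- F1 ⊓ F2 = F1, so F1 ≤ F2, so F1 = F2
      have hF12 : F1 ⊓ F2 = F1 :=
        flat_eq_of_le inf_le_left hne12 (by rw [hrk1, hcase])
      have hF1le : F1 ≤ F2 := by
        rw [← hF12]; exact inf_le_right
      exact hne (flat_eq_of_le hF1le (hS t F1 h1).1 (by rw [hrk1, hrk2]))
    · -- F1 ⊓ H = F1 ⊓ F2, so x ∈ H, contradiction
      have hrkH1 := (claim1 t F1 h1).2
      have hHF : F1 ⊓ H = F1 ⊓ F2 := by
        refine flat_eq_of_le hle12 hne1 ?_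
        rw [hrkH1]
        omega
      rw [← hHF] at hxmem
      exact hxc ((memH x).mp ((AffineSubspace.mem_inf_iff x F1 H).mp hxmem).2)
  exact ⟨H, claim1, claim2⟩

private lemma finrank_map_eq' {V W : Type*} [AddCommGroup V] [Module ℝ V]
    [FiniteDimensional ℝ V] [AddCommGroup W] [Module ℝ W]
    (π : V →ₗ[ℝ] W) (D : Submodule ℝ V) (h : ∀ x ∈ D, π x = 0 → x = 0) :
    finrank ℝ (D.map π) = finrank ℝ D := by
  have hker : LinearMap.ker (π.domRestrict D) = ⊥ := by
    rw [LinearMap.ker_eq_bot']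
    rintro ⟨x, hx⟩ hx0
    exact Subtype.ext (h x hx (by simpa [LinearMap.domRestrict_apply] using hx0))
  have := (π.domRestrict D).finrank_range_add_finrank_ker
  rw [hker, finrank_bot, LinearMap.range_domRestrict] at this
  simpa using this

private lemma stepP {n d : ℕ} (hdn : d ≤ n)
    (S : Fin d → Finset (AffineSubspace ℝ (Fin (n+1) → ℝ)))
    (hS : ∀ t : Fin d, ∀ g ∈ S t, IsFlat (n+1) t g) :
    ∃ φ : AffineSubspace ℝ (Fin (n+1) → ℝ) → AffineSubspace ℝ (Fin n → ℝ),
      (∀ F G, F ≤ G → φ F ≤ φ G) ∧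
      (∀ t : Fin d, ∀ g ∈ S t, IsFlat n t (φ g)) ∧
      (∀ t : Fin d, Set.InjOn φ (S t)) := by
  classical
  let ι := Option ((Σ t : Fin d, {F // F ∈ S t}) ⊕
    (Σ t : Fin d, {F // F ∈ S t} × {F // F ∈ S t}))
  let bad : ι → Submodule ℝ (Fin (n+1) → ℝ) := fun i =>
    match i with
    | none => ⊥
    | some (.inl ⟨_, F⟩) => F.1.direction
    | some (.inr ⟨_, F1, F2⟩) =>
        if h : ∃ p2, p2 ∈ F2.1 ∧ p2 ∉ F1.1 ∧ ∃ p1, p1 ∈ F1.1 then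
          F1.1.direction ⊔ (ℝ ∙ (h.choose - h.choose_spec.2.2.choose))
        else ⊥
  have hbad : ∀ i, bad i ≠ ⊤ := by
    rintro (_ | (⟨t, F⟩ | ⟨t, F1, F2⟩))
    · exact bot_ne_top
    · have h := (hS t F.1 F.2).2
      refine (Submodule.lt_top_of_finrank_lt_finrank ?_).ne
      rw [h, Module.finrank_fin_fun]
      have ht : (t : ℕ) < d := t.2
      omega
    · dsimp only [bad]
      split_ifs with h
      · obtain ⟨hp2, hp2n, hp1ex⟩ := h.choose_spec
        have hw : h.choose - hp1ex.choose ≠ 0 :=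
          sub_ne_zero.mpr (fun hh => hp2n (hh ▸ hp1ex.choose_spec))
        refine (Submodule.lt_top_of_finrank_lt_finrank ?_).ne
        have h3 := Submodule.finrank_sup_add_finrank_inf_eq F1.1.direction
          (ℝ ∙ (h.choose - h.choose_spec.2.2.choose))
        rw [finrank_span_singleton hw, (hS t F1.1 F1.2).2] at h3
        rw [Module.finrank_fin_fun]
        have ht : (t : ℕ) < d := t.2
        omega
      · exact bot_ne_top
  obtain ⟨v, hv⟩ := exists_notMem_all bad hbad
  have hv0 : v ≠ 0 := by
    have := hv none
    exact fun h => this (by rw [h]; exact Submodule.zero_mem _)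
  have hvD : ∀ t : Fin d, ∀ F ∈ S t, v ∉ F.direction :=
    fun t F hF => hv (some (.inl ⟨t, ⟨F, hF⟩⟩))
  -- build the projection
  set K : Submodule ℝ (Fin (n+1) → ℝ) := ℝ ∙ v with hKdef
  have hK1 : finrank ℝ K = 1 := finrank_span_singleton hv0
  have hQ : finrank ℝ ((Fin (n+1) → ℝ) ⧸ K) = n := by
    have := K.finrank_quotient_add_finrank
    rw [hK1, Module.finrank_fin_fun] at this
    omega
  obtain ⟨e⟩ : Nonempty (((Fin (n+1) → ℝ) ⧸ K) ≃ₗ[ℝ] (Fin n → ℝ)) :=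
    FiniteDimensional.nonempty_linearEquiv_of_finrank_eq
      (by rw [hQ, Module.finrank_fin_fun])
  set π : (Fin (n+1) → ℝ) →ₗ[ℝ] (Fin n → ℝ) := e.toLinearMap ∘ₗ K.mkQ with hπdef
  have hker : ∀ x, π x = 0 ↔ x ∈ K := by
    intro x
    rw [hπdef]
    simp only [LinearMap.comp_apply, LinearEquiv.coe_coe, Submodule.mkQ_apply]
    rw [LinearEquiv.map_eq_zero_iff]
    exact Submodule.Quotient.mk_eq_zero K
  refine ⟨fun F => F.map π.toAffineMap, ?_, ?_, ?_⟩
  · intro F G hFG x hx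
    simp only [AffineSubspace.mem_map] at hx ⊢
    obtain ⟨y, hy, rfl⟩ := hx
    exact ⟨y, hFG hy, rfl⟩
  · intro t F hF
    obtain ⟨⟨p, hp⟩, hrk⟩ := hS t F hF
    constructor
    · exact ⟨π p, AffineSubspace.mem_map.mpr ⟨p, hp, rfl⟩⟩
    · rw [AffineSubspace.map_direction]
      have hinj0 : ∀ x ∈ F.direction, π x = 0 → x = 0 := by
        intro x hx hx0
        rw [hker, hKdef, Submodule.mem_span_singleton] at hx0
        obtain ⟨a, rfl⟩ := hx0
        by_contra hne0
        have ha : a ≠ 0 := by rintro rfl; simp at hne0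
        refine hvD t F hF ?_
        have := Submodule.smul_mem F.direction a⁻¹ hx
        rwa [smul_smul, inv_mul_cancel₀ ha, one_smul] at this
      rw [show π.toAffineMap.linear = π from rfl]
      rw [finrank_map_eq' π F.direction hinj0, hrk]
  · intro t F1 h1 F2 h2 heq
    simp only [Finset.mem_coe] at h1 h2
    by_contra hne
    have hrk1 := (hS t F1 h1).2
    have hrk2 := (hS t F2 h2).2
    have hex : ∃ p2, p2 ∈ F2 ∧ p2 ∉ F1 ∧ ∃ p1, p1 ∈ F1 := by
      have hnle : ¬F2 ≤ F1 := fun hle =>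
        hne (flat_eq_of_le hle (hS t F2 h2).1 (by rw [hrk1, hrk2])).symm
      obtain ⟨p2, hp2, hp2n⟩ := SetLike.not_le_iff_exists.mp hnle
      obtain ⟨p1, hp1⟩ := (hS t F1 h1).1
      exact ⟨p2, hp2, hp2n, p1, hp1⟩
    have hbadp := hv (some (.inr ⟨t, ⟨F1, h1⟩, ⟨F2, h2⟩⟩))
    simp only [bad, dif_pos hex] at hbadp
    obtain ⟨hp2, hp2n, hp1ex⟩ := hex.choose_spec
    have hp1 := hp1ex.choose_spec
    have heq' : F1.map π.toAffineMap = F2.map π.toAffineMap := heq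
    have hmem : π hex.choose ∈ F1.map π.toAffineMap := by
      rw [heq']
      exact AffineSubspace.mem_map.mpr ⟨hex.choose, hp2, rfl⟩
    rw [AffineSubspace.mem_map] at hmem
    obtain ⟨q, hq, hπq⟩ := hmem
    have hπq' : π q = π hex.choose := hπq
    have hqk : hex.choose - q ∈ K := by
      rw [← hker, map_sub, hπq', sub_self]
    rw [hKdef, Submodule.mem_span_singleton] at hqk
    obtain ⟨a, ha⟩ := hqk
    have hqd : q - hp1ex.choose ∈ F1.direction := by
      have := AffineSubspace.vsub_mem_direction hq hp1
      rwa [vsub_eq_sub] at this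
    by_cases ha0 : a = 0
    · rw [ha0, zero_smul] at ha
      exact hp2n ((sub_eq_zero.mp ha.symm) ▸ hq)
    · apply hbadp
      have hw : hex.choose - hp1ex.choose ∈
          F1.direction ⊔ ℝ ∙ (hex.choose - hp1ex.choose) :=
        Submodule.mem_sup_right (Submodule.mem_span_singleton_self _)
      have hu : q - hp1ex.choose ∈
          F1.direction ⊔ ℝ ∙ (hex.choose - hp1ex.choose) :=
        Submodule.mem_sup_left hqd
      have h5 : a • v = (hex.choose - hp1ex.choose) - (q - hp1ex.choose) := by
        rw [ha]; abel
      have h6 : a • v ∈ F1.direction ⊔ ℝ ∙ (hex.choose - hp1ex.choose) :=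
        h5 ▸ sub_mem hw hu
      have := Submodule.smul_mem _ a⁻¹ h6
      rwa [smul_smul, inv_mul_cancel₀ ha0, one_smul] at this


private lemma flagCount_le_map {n n' d : ℕ}
    (S : Fin d → Finset (AffineSubspace ℝ (Fin n → ℝ)))
    (φ : AffineSubspace ℝ (Fin n → ℝ) → AffineSubspace ℝ (Fin n' → ℝ))
    (hmono : ∀ F G, F ≤ G → φ F ≤ φ G)
    (hinj : ∀ t : Fin d, Set.InjOn φ (S t)) :
    flagCount n d S ≤ flagCount n' d fun t => (S t).image φ := by
  refine Set.ncard_le_ncard_of_injOn (fun g => φ ∘ g) ?_ ?_ ?_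
  · rintro g ⟨hg1, hg2⟩
    exact ⟨fun t => Finset.mem_image_of_mem φ (hg1 t),
      fun t h => hmono _ _ (hg2 t h)⟩
  · rintro g ⟨hg1, _⟩ g' ⟨hg1', _⟩ hgg
    funext t
    exact hinj t (Finset.mem_coe.mpr (hg1 t)) (Finset.mem_coe.mpr (hg1' t))
      (congrFun hgg t)
  · apply Set.Finite.subset
      (Set.Finite.pi' (fun t => (((S t).image φ) : Set (AffineSubspace ℝ (Fin n' → ℝ))).toFinite))
    exact fun g hg t => hg.1 t

private lemma reduceJ {n d : ℕ} (hn : 1 ≤ n) :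
    ∀ (j : ℕ) (S : Fin d → Finset (AffineSubspace ℝ (Fin n → ℝ))),
      (∀ t : Fin d, ∀ g ∈ S t, IsFlat n (j + t) g) →
      ∃ S' : Fin d → Finset (AffineSubspace ℝ (Fin n → ℝ)),
        (∀ t : Fin d, ∀ g ∈ S' t, IsFlat n t g) ∧
        (∀ t, (S' t).card = (S t).card) ∧ flagCount n d S ≤ flagCount n d S' := by
  intro j
  induction j with
  | zero =>
    intro S hS
    exact ⟨S, fun t g hg => by simpa using hS t g hg, fun t => rfl, le_rfl⟩
  | succ j ih =>
    intro S hS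
    obtain ⟨H, hflat, hinj⟩ := stepH hn S hS
    have hdims : ∀ t : Fin d, ∀ g ∈ (S t).image (· ⊓ H), IsFlat n (j + t) g := by
      intro t g hg
      rw [Finset.mem_image] at hg
      obtain ⟨F, hF, rfl⟩ := hg
      exact hflat t F hF
    obtain ⟨S', h1, h2, h3⟩ := ih (fun t => (S t).image (· ⊓ H)) hdims
    refine ⟨S', h1, ?_, ?_⟩
    · intro t
      rw [h2 t, Finset.card_image_of_injOn (hinj t)]
    · exact le_trans
        (flagCount_le_map S (· ⊓ H) (fun F G h => inf_le_inf_right H h) hinj) h3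

private lemma reduceM {d : ℕ} :
    ∀ (m : ℕ) (S : Fin d → Finset (AffineSubspace ℝ (Fin (d + m) → ℝ))),
      (∀ t : Fin d, ∀ g ∈ S t, IsFlat (d + m) t g) →
      ∃ S' : Fin d → Finset (AffineSubspace ℝ (Fin d → ℝ)),
        (∀ t : Fin d, ∀ g ∈ S' t, IsFlat d t g) ∧
        (∀ t, (S' t).card = (S t).card) ∧ flagCount (d + m) d S ≤ flagCount d d S' := by
  intro m
  induction m with
  | zero =>
    intro S hS
    exact ⟨S, hS, fun t => rfl, le_rfl⟩
  | succ m ih =>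
    intro S hS
    obtain ⟨φ, hmono, hflat, hinj⟩ := stepP (Nat.le_add_right d m) S hS
    have hdims : ∀ t : Fin d, ∀ g ∈ (S t).image φ, IsFlat (d + m) t g := by
      intro t g hg
      rw [Finset.mem_image] at hg
      obtain ⟨F, hF, rfl⟩ := hg
      exact hflat t F hF
    obtain ⟨S', h1, h2, h3⟩ := ih (fun t => (S t).image φ) hdims
    refine ⟨S', h1, ?_, ?_⟩
    · intro t
      rw [h2 t, Finset.card_image_of_injOn (hinj t)]
    · exact le_trans (flagCount_le_map S φ hmono hinj) h3

/-- Lifting lemma: if `f` bounds the number of complete flags in `ℝ^d`, then for all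
`m ≥ 0` and `0 ≤ j ≤ m`, `f` also bounds the number of partial flags of `i`-flats,
`i = j, …, j+d-1`, in `ℝ^{d+m}`. -/
theorem lifting_lemma (d : ℕ) (hd : 2 ≤ d) (f : (Fin d → ℕ) → ℝ)
    (hf : ∀ S : Fin d → Finset (AffineSubspace ℝ (Fin d → ℝ)),
        (∀ i : Fin d, ∀ g ∈ S i, IsFlat d i g) →
        (flagCount d d S : ℝ) ≤ f (fun i => (S i).card)) :
    ∀ m j : ℕ, j ≤ m →
      ∀ S : Fin d → Finset (AffineSubspace ℝ (Fin (d + m) → ℝ)),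
        (∀ t : Fin d, ∀ g ∈ S t, IsFlat (d + m) (j + t) g) →
        (flagCount (d + m) d S : ℝ) ≤ f (fun t => (S t).card) := by
  intro m j hjm S hS
  obtain ⟨S1, h1, hc1, hcount1⟩ := reduceJ (n := d + m) (by omega) j S hS
  obtain ⟨S2, h2, hc2, hcount2⟩ := reduceM m S1 h1
  have hcast : (flagCount (d + m) d S : ℝ) ≤ (flagCount d d S2 : ℝ) := by
    exact_mod_cast le_trans hcount1 hcount2
  refine le_trans hcast (le_of_le_of_eq (hf S2 h2) ?_)
  exact congrArg f (funext fun t => by rw [hc2 t, hc1 t])
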